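/- Let H be a separable Hilbert space, {φ_n}_{n≥0} a complete sequence of unit vectors, and {γ_n}_{n≥0} defined by γ_0 = φ_0, γ_n = φ_n − Σ_{k=0}^{n−1} ⟨φ_n, φ_k⟩ γ_k. The sequence {φ_n} is effective (i.e. the Kaczmarz iterates ξ_n converge to ξ for every ξ ∈ H) if and only if {γ_n}_{n≥0} is a Parseval frame for H, i.e. Σ_{n≥0} |⟨ξ, γ_n⟩|² = ‖ξ‖² for all ξ ∈ H. -/
import Mathlib


open Filter
open scoped Topology ComplexConjugate

local notation "⟪" x ", " y "⟫" => @inner ℂ _ _ x y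

private lemma unit_proj_sq {H : Type*} [NormedAddCommGroup H] [InnerProductSpace ℂ H]
    (φ0 v : H) (hφ0 : ‖φ0‖ = 1) :
    ‖v - ⟪φ0, v⟫ • φ0‖ ^ 2 = ‖v‖ ^ 2 - ‖⟪φ0, v⟫‖ ^ 2 := by
  have h := @norm_sub_sq ℂ _ _ _ _ v (⟪φ0, v⟫ • φ0)
  rw [inner_smul_right] at h
  have h1 : RCLike.re (⟪φ0, v⟫ * ⟪v, φ0⟫) = ‖⟪φ0, v⟫‖ ^ 2 := by
    rw [← inner_conj_symm v φ0, RCLike.mul_conj, ← RCLike.ofReal_pow, RCLike.ofReal_re]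
  have h2 : ‖⟪φ0, v⟫ • φ0‖ ^ 2 = ‖⟪φ0, v⟫‖ ^ 2 := by
    rw [norm_smul, hφ0, mul_one]
  rw [h1, h2] at h
  rw [h]; ring

/-- a complete sequence of unit vectors is effective (Kaczmarz
iterates converge to the vector, for every vector) iff the auxiliary sequence
`γ_n` is a Parseval frame.  The paper's inner product `⟨a,b⟩` (linear in the
first argument) corresponds to Mathlib's `⟪b, a⟫`. -/
theorem effective_iff_parseval_frame
    (H : Type*) [NormedAddCommGroup H] [InnerProductSpace ℂ H]
    [CompleteSpace H] [TopologicalSpace.SeparableSpace H]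
    (φ : ℕ → H) (hφ : ∀ n, ‖φ n‖ = 1)
    (hcomplete : (Submodule.span ℂ (Set.range φ)).topologicalClosure = ⊤)
    (x : H → ℕ → H)
    (hx0 : ∀ ξ : H, x ξ 0 = ⟪φ 0, ξ⟫ • φ 0)
    (hxs : ∀ ξ : H, ∀ n : ℕ,
      x ξ (n + 1) = x ξ n + ⟪φ (n + 1), ξ - x ξ n⟫ • φ (n + 1))
    (γ : ℕ → H)
    (hγ0 : γ 0 = φ 0)
    (hγs : ∀ n : ℕ,
      γ (n + 1) = φ (n + 1) - ∑ k ∈ Finset.range (n + 1), ⟪φ k, φ (n + 1)⟫ • γ k) :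
    (∀ ξ : H, Tendsto (fun n => x ξ n) atTop (𝓝 ξ)) ↔
      (∀ ξ : H, HasSum (fun n => ‖⟪γ n, ξ⟫‖ ^ 2) (‖ξ‖ ^ 2)) := by
  -- the Kaczmarz iterates expand in terms of the `γ` coefficients
  have hxsum : ∀ (ξ : H) (n : ℕ),
      x ξ n = ∑ k ∈ Finset.range (n + 1), ⟪γ k, ξ⟫ • φ k := by
    intro ξ n
    induction n with
    | zero => simp [hx0, hγ0]
    | succ n ih =>
      rw [hxs, ih]
      conv_rhs => rw [Finset.sum_range_succ]
      congr 2
      rw [hγs n]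
      simp only [inner_sub_left, inner_sub_right, inner_sum, sum_inner,
        inner_smul_left, inner_smul_right, inner_conj_symm]
      congr 1
      exact Finset.sum_congr rfl fun k _ => mul_comm _ _
  -- hence the key coefficient identity
  have hkey : ∀ (ξ : H) (n : ℕ), ⟪φ (n + 1), ξ - x ξ n⟫ = ⟪γ (n + 1), ξ⟫ := by
    intro ξ n
    rw [hxsum, hγs n]
    simp only [inner_sub_left, inner_sub_right, inner_sum, sum_inner,
      inner_smul_left, inner_smul_right, inner_conj_symm]
    congr 1
    exact Finset.sum_congr rfl fun k _ => mul_comm _ _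
  -- Pythagorean identity for the error
  have herr : ∀ (ξ : H) (n : ℕ),
      ‖ξ - x ξ n‖ ^ 2 = ‖ξ‖ ^ 2 - ∑ k ∈ Finset.range (n + 1), ‖⟪γ k, ξ⟫‖ ^ 2 := by
    intro ξ n
    induction n with
    | zero =>
      rw [hx0]
      simpa [hγ0] using unit_proj_sq (φ 0) ξ (hφ 0)
    | succ n ih =>
      have : ξ - x ξ (n + 1)
          = (ξ - x ξ n) - ⟪φ (n + 1), ξ - x ξ n⟫ • φ (n + 1) := by
        rw [hxs]; abel
      rw [this, unit_proj_sq (φ (n + 1)) (ξ - x ξ n) (hφ (n + 1)), ih, hkey]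
      conv_rhs => rw [Finset.sum_range_succ]
      ring
  -- translate convergence into the partial sums statement
  have hequiv : ∀ ξ : H,
      Tendsto (fun n => x ξ n) atTop (𝓝 ξ) ↔
        HasSum (fun n => ‖⟪γ n, ξ⟫‖ ^ 2) (‖ξ‖ ^ 2) := by
    intro ξ
    rw [hasSum_iff_tendsto_nat_of_nonneg (fun i => by positivity)]
    have hS : ∀ n : ℕ, ∑ k ∈ Finset.range (n + 1), ‖⟪γ k, ξ⟫‖ ^ 2
        = ‖ξ‖ ^ 2 - ‖ξ - x ξ n‖ ^ 2 := fun n => by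
      have := herr ξ n; linarith
    constructor
    · intro h
      have h0 : Tendsto (fun n => ‖ξ - x ξ n‖ ^ 2) atTop (𝓝 0) := by
        have : Tendsto (fun n => ξ - x ξ n) atTop (𝓝 0) := by
          simpa using h.const_sub ξ
        simpa using ((this.norm).pow 2)
      rw [← tendsto_add_atTop_iff_nat 1]
      simp only [hS]
      simpa using tendsto_const_nhds.sub h0
    · intro h
      rw [← tendsto_add_atTop_iff_nat 1] at h
      simp only [hS] at h
      have h0 : Tendsto (fun n => ‖ξ - x ξ n‖ ^ 2) atTop (𝓝 0) := by
        have h' := h.const_sub (‖ξ‖ ^ 2)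
        simp only [sub_sub_cancel, sub_self] at h'
        exact h'
      have hn : Tendsto (fun n => ‖ξ - x ξ n‖) atTop (𝓝 0) := by
        have := h0.sqrt
        simpa [Real.sqrt_sq (norm_nonneg _)] using this
      rw [tendsto_iff_norm_sub_tendsto_zero]
      simpa [norm_sub_rev] using hn
  exact forall_congr' hequiv
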